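/- For every a ∈ ℕ, the maximum m such that [a, m-1] ∈ S₂ equals 2^a · a. Equivalently: [a, 2^a·a - 1] ∈ S₂ but [a, 2^a·a] ∉ S₂. -/

import Mathlib

open Finset

/-- `F < G` for finite sets: every element of `F` is below every element of `G`. -/
def FinsetLT (F G : Finset ℕ) : Prop := ∀ x ∈ F, ∀ y ∈ G, x < y

/-- Membership in the Schreier family `S₁`: a finite set of positive integers
with `|F| ≤ min F` (the empty set belongs trivially). -/
def IsSchreier (F : Finset ℕ) : Prop := ∀ n ∈ F, 0 < n ∧ F.card ≤ n

/-- `F` is a union of at most `d` sets `F₁ < F₂ < ⋯`, each in the family `P`. -/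
def Combine (P : Finset ℕ → Prop) (d : ℕ) (F : Finset ℕ) : Prop :=
  ∃ L : List (Finset ℕ), L.length ≤ d ∧ L.Pairwise FinsetLT ∧
    (∀ G ∈ L, P G) ∧ L.foldr (· ∪ ·) ∅ = F

/-- Membership in `S₂`. -/
def MemS2 (F : Finset ℕ) : Prop :=
  F = ∅ ∨ ∃ h : F.Nonempty, Combine IsSchreier (F.min' h) F

/-- Membership in `S₃`. -/
def MemS3 (F : Finset ℕ) : Prop :=
  F = ∅ ∨ ∃ h : F.Nonempty, Combine MemS2 (F.min' h) F

/-- `F` is a maximal member of the family `P` (among sets of positive integers). -/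
def IsFull (P : Finset ℕ → Prop) (F : Finset ℕ) : Prop :=
  P F ∧ ∀ n : ℕ, 0 < n → n ∉ F → ¬ P (insert n F)

/-- `F ∈ full_{a,b}(P)`. -/
def FullAB (P : Finset ℕ → Prop) (a b : ℕ) (F : Finset ℕ) : Prop :=
  P F ∧ F ⊆ Finset.Icc a b ∧ a ∈ F ∧
    ∀ n ∈ Finset.Icc a b, n ∉ F → ¬ P (insert n F)

/-- The tower function `τ`. -/
def tau : ℕ → ℕ → ℕ
  | 0, a => a
  | i + 1, a => 2 ^ tau i a

/-- `E₁(F)`: `F` itself if `|F| ≤ min F`, otherwise the `min F` smallest elements of `F`. -/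
def E1 (F : Finset ℕ) : Finset ℕ :=
  if h : F.Nonempty then ((F.sort (· ≤ ·)).take (F.min' h)).toFinset else ∅

/-- Union of the first `i` greedy pieces. -/
def Eacc : ℕ → Finset ℕ → Finset ℕ
  | 0, _ => ∅
  | i + 1, F => Eacc i F ∪ E1 (F \ Eacc i F)

/-- The `i`-th greedy piece `E_i(F)` (for `i ≥ 1`). -/
def Epiece (i : ℕ) (F : Finset ℕ) : Finset ℕ := E1 (F \ Eacc (i - 1) F)

open Classical in
/-- `E₁*(F)`: `F` itself if `F ∈ S₂`, otherwise `E₁(F) ∪ ⋯ ∪ E_{min F}(F)`. -/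
noncomputable def E1star (F : Finset ℕ) : Finset ℕ :=
  if MemS2 F then F
  else if h : F.Nonempty then Eacc (F.min' h) F else ∅

/-- Union of the first `i` starred greedy pieces. -/
noncomputable def EaccStar : ℕ → Finset ℕ → Finset ℕ
  | 0, _ => ∅
  | i + 1, F => EaccStar i F ∪ E1star (F \ EaccStar i F)

/-- The `i`-th starred greedy piece `E_i*(F)` (for `i ≥ 1`). -/
noncomputable def EpieceStar (i : ℕ) (F : Finset ℕ) : Finset ℕ :=
  E1star (F \ EaccStar (i - 1) F)

lemma mem_foldr_union {L : List (Finset ℕ)} {x : ℕ} :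
    x ∈ L.foldr (· ∪ ·) ∅ ↔ ∃ G ∈ L, x ∈ G := by
  induction L with
  | nil => simp
  | cons G L ih => simp [ih]

lemma subset_foldr_union {L : List (Finset ℕ)} {G : Finset ℕ} (hG : G ∈ L) :
    G ⊆ L.foldr (· ∪ ·) ∅ := fun x hx => mem_foldr_union.2 ⟨G, hG, hx⟩

lemma build (n : ℕ) : ∀ a : ℕ, 0 < a → ∃ L : List (Finset ℕ), L.length = n ∧
    L.Pairwise FinsetLT ∧ (∀ G ∈ L, IsSchreier G) ∧
    L.foldr (· ∪ ·) ∅ = Finset.Icc a (2 ^ n * a - 1) := by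
  induction n with
  | zero =>
    intro a ha
    refine ⟨[], rfl, .nil, by simp, ?_⟩
    simp only [List.foldr_nil, pow_zero, one_mul]
    symm; rw [Finset.Icc_eq_empty]; omega
  | succ n ih =>
    intro a ha
    obtain ⟨L, hlen, hpw, hsch, hfold⟩ := ih (2 * a) (by omega)
    have hk : a ≤ 2 ^ n * a := Nat.le_mul_of_pos_left a (by positivity)
    refine ⟨Finset.Icc a (2 * a - 1) :: L, by simp [hlen], ?_, ?_, ?_⟩
    · refine List.Pairwise.cons ?_ hpw
      intro G hG x hx y hy
      have hy' : y ∈ Finset.Icc (2 * a) (2 ^ n * (2 * a) - 1) := by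
        rw [← hfold]; exact subset_foldr_union hG hy
      simp only [Finset.mem_Icc] at hx hy'
      omega
    · intro G hG
      rcases List.mem_cons.1 hG with rfl | hG
      · intro m hm
        simp only [Finset.mem_Icc] at hm
        rw [Nat.card_Icc]
        constructor <;> omega
      · exact hsch G hG
    · show Finset.Icc a (2 * a - 1) ∪ L.foldr (· ∪ ·) ∅ = _
      rw [hfold]
      have e1 : 2 ^ n * (2 * a) = 2 * (2 ^ n * a) := by ring
      have e2 : 2 ^ (n + 1) * a = 2 * (2 ^ n * a) := by ring
      rw [e1, e2]
      ext x
      simp only [Finset.mem_union, Finset.mem_Icc]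
      omega

lemma bound : ∀ L : List (Finset ℕ), ∀ a b : ℕ, 0 < a → a ≤ b →
    L.Pairwise FinsetLT → (∀ G ∈ L, IsSchreier G) →
    L.foldr (· ∪ ·) ∅ = Finset.Icc a b → b + 1 ≤ 2 ^ L.length * a := by
  intro L
  induction L with
  | nil =>
    intro a b ha hab _ _ hfold
    exfalso
    have h0 : Finset.Icc a b = (∅ : Finset ℕ) := by simpa using hfold.symm
    have : a ∈ Finset.Icc a b := Finset.mem_Icc.2 ⟨le_refl a, hab⟩
    rw [h0] at this
    simp at this
  | cons G L ih =>
    intro a b ha hab hpw hsch hfold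
    rw [List.foldr_cons] at hfold
    rw [List.pairwise_cons] at hpw
    obtain ⟨hGL, hpw'⟩ := hpw
    have hsub : ∀ x ∈ G ∪ L.foldr (· ∪ ·) ∅, a ≤ x ∧ x ≤ b := by
      intro x hx
      have : x ∈ Finset.Icc a b := by rw [← hfold]; exact hx
      exact Finset.mem_Icc.1 this
    by_cases hG : G = ∅
    · subst hG
      have hfold' : L.foldr (· ∪ ·) ∅ = Finset.Icc a b := by
        rw [← hfold]; simp
      have := ih a b ha hab hpw' (fun G hG => hsch G (List.mem_cons_of_mem _ hG)) hfold'
      calc b + 1 ≤ 2 ^ L.length * a := this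
        _ ≤ 2 ^ ((∅ : Finset ℕ) :: L).length * a := by
          apply Nat.mul_le_mul_right
          exact Nat.pow_le_pow_right (by norm_num) (by simp)
    · -- G nonempty
      have hGne : G.Nonempty := Finset.nonempty_iff_ne_empty.2 hG
      -- a ∈ G
      have haG : a ∈ G := by
        have haU : a ∈ G ∪ L.foldr (· ∪ ·) ∅ := by
          rw [hfold]; exact Finset.mem_Icc.2 ⟨le_refl a, hab⟩
        rcases Finset.mem_union.1 haU with h | h
        · exact h
        · exfalso
          obtain ⟨G', hG', haG'⟩ := mem_foldr_union.1 h
          obtain ⟨x, hx⟩ := hGne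
          have hxa : x < a := hGL G' hG' x hx a haG' -- FinsetLT G G'? hGL : ∀ G' ∈ L, FinsetLT G G'
          have := (hsub x (Finset.mem_union_left _ hx)).1
          omega
      have hcard : G.card ≤ a := (hsch G List.mem_cons_self a haG).2
      have hcard1 : 1 ≤ G.card := Finset.card_pos.2 hGne
      set c := a + G.card - 1 with hc
      -- c ≤ b
      have hGsub : G ⊆ Finset.Icc a b := fun x hx =>
        Finset.mem_Icc.2 (hsub x (Finset.mem_union_left _ hx))
      have hcb : c ≤ b := by
        have := Finset.card_le_card hGsub
        rw [Nat.card_Icc] at this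
        omega
      -- Icc a c ⊆ G
      have hIccG : Finset.Icc a c ⊆ G := by
        intro v hv
        simp only [Finset.mem_Icc] at hv
        have hvU : v ∈ G ∪ L.foldr (· ∪ ·) ∅ := by
          rw [hfold]; exact Finset.mem_Icc.2 ⟨hv.1, le_trans hv.2 hcb⟩
        rcases Finset.mem_union.1 hvU with h | h
        · exact h
        · exfalso
          obtain ⟨G', hG', hvG'⟩ := mem_foldr_union.1 h
          have hlt : ∀ x ∈ G, x < v := fun x hx => hGL G' hG' x hx v hvG'
          have hGIco : G ⊆ Finset.Ico a v := fun x hx =>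
            Finset.mem_Ico.2 ⟨(hsub x (Finset.mem_union_left _ hx)).1, hlt x hx⟩
          have := Finset.card_le_card hGIco
          rw [Nat.card_Ico] at this
          omega
      have hGeq : G = Finset.Icc a c := by
        refine (Finset.eq_of_subset_of_card_le hIccG ?_).symm
        rw [Nat.card_Icc]; omega
      by_cases hcb' : c = b
      · -- whole interval is G; b + 1 = a + card G ≤ 2a
        have : b + 1 ≤ 2 * a := by omega
        calc b + 1 ≤ 2 * a := this
          _ ≤ 2 ^ (G :: L).length * a := by
            apply Nat.mul_le_mul_right
            have : 1 ≤ (G :: L).length := by simp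
            calc 2 = 2 ^ 1 := rfl
              _ ≤ 2 ^ (G :: L).length := Nat.pow_le_pow_right (by norm_num) this
      · have hclt : c < b := lt_of_le_of_ne hcb hcb'
        have hfold' : L.foldr (· ∪ ·) ∅ = Finset.Icc (c + 1) b := by
          ext x
          constructor
          · intro hx
            obtain ⟨G', hG', hxG'⟩ := mem_foldr_union.1 hx
            have hcx : c < x := by
              have hcG : c ∈ G := hIccG (Finset.mem_Icc.2 ⟨by omega, le_refl c⟩)
              exact hGL G' hG' c hcG x hxG'
            exact Finset.mem_Icc.2 ⟨by omega, (hsub x (Finset.mem_union_right _ hx)).2⟩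
          · intro hx
            simp only [Finset.mem_Icc] at hx
            have hxU : x ∈ G ∪ L.foldr (· ∪ ·) ∅ := by
              rw [hfold]; exact Finset.mem_Icc.2 ⟨by omega, hx.2⟩
            rcases Finset.mem_union.1 hxU with h | h
            · exfalso
              rw [hGeq] at h
              simp only [Finset.mem_Icc] at h
              omega
            · exact h
        have := ih (c + 1) b (by omega) (by omega) hpw'
          (fun G hG => hsch G (List.mem_cons_of_mem _ hG)) hfold'
        calc b + 1 ≤ 2 ^ L.length * (c + 1) := this
          _ ≤ 2 ^ L.length * (2 * a) := by
            apply Nat.mul_le_mul_left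
            omega
          _ = 2 ^ (G :: L).length * a := by
            simp [List.length_cons, pow_succ]; ring

lemma min'_Icc {a b : ℕ} (hab : a ≤ b) :
    (Finset.Icc a b).min' ⟨a, Finset.mem_Icc.2 ⟨le_refl a, hab⟩⟩ = a := by
  apply le_antisymm
  · exact Finset.min'_le _ _ (Finset.mem_Icc.2 ⟨le_refl a, hab⟩)
  · have := Finset.min'_mem (Finset.Icc a b) ⟨a, Finset.mem_Icc.2 ⟨le_refl a, hab⟩⟩
    exact (Finset.mem_Icc.1 this).1

theorem stmt2 (a : ℕ) (ha : 0 < a) :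
    MemS2 (Finset.Icc a (2 ^ a * a - 1)) ∧
    ¬ MemS2 (Finset.Icc a (2 ^ a * a)) := by
  have h2a : 2 * a ≤ 2 ^ a * a := by
    have h2 : 2 ≤ 2 ^ a := by
      calc 2 = 2 ^ 1 := rfl
        _ ≤ 2 ^ a := Nat.pow_le_pow_right (by norm_num) ha
    exact Nat.mul_le_mul_right a h2
  constructor
  · right
    have hab : a ≤ 2 ^ a * a - 1 := by omega
    refine ⟨⟨a, Finset.mem_Icc.2 ⟨le_refl a, hab⟩⟩, ?_⟩
    rw [min'_Icc hab]
    obtain ⟨L, hlen, hpw, hsch, hfold⟩ := build a a ha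
    exact ⟨L, le_of_eq hlen, hpw, hsch, hfold⟩
  · intro hmem
    rcases hmem with h | ⟨hne, L, hlen, hpw, hsch, hfold⟩
    · have : a ∈ (∅ : Finset ℕ) := by
        rw [← h]; exact Finset.mem_Icc.2 ⟨le_refl a, by omega⟩
      simp at this
    · have hab : a ≤ 2 ^ a * a := by omega
      rw [min'_Icc hab] at hlen
      have := bound L a (2 ^ a * a) ha hab hpw hsch hfold
      have h2 : 2 ^ L.length * a ≤ 2 ^ a * a :=
        Nat.mul_le_mul_right a (Nat.pow_le_pow_right (by norm_num) hlen)
      omega
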